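/- Linear-algebra form of Corollary 1.3 (the cokernel of the Bockstein differential): Let p be an odd prime, n > 3 an integer, and F = ℤ/p. Let E be the F-vector space with basis consisting of symbols ζ_m for m ∈ ℤ and h_{j,m} for j ∈ {0,1,…,n−1} and m ∈ ℤ. Let D ⊆ E be the F-linear span of the set { h_{n−1, s−1} : s ∈ ℤ, p ∤ s } ∪ { h_{[i−1], (sp−1)p^{i−1}} : i ≥ 1, s ∈ ℤ, p ∤ s }. Then the images in E/D of the following elements form an F-basis of E/D: ζ_m for all m ∈ ℤ; h_{n−1, tp−1} for all t ∈ ℤ; h_{j,0} for 0 ≤ j ≤ n−2; and h_{j, s p^k} for 0 ≤ j ≤ n−2, k ≥ 0, and s ∈ ℤ with p ∤ s, subject to the condition that [k] ≠ j, or s ≢ −1 (mod p), or s ≡ −1 (mod p²). -/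

import Mathlib

namespace Stmt7

/-- Index type for the basis of `E`: `ζ_m` is indexed by `Sum.inl m`, and
`h_{j,m}` by `Sum.inr (j, m)`. -/
abbrev Idx (n : ℕ) := ℤ ⊕ (Fin n × ℤ)

/-- The `F`-vector space `E` with basis `ζ_m` (`m ∈ ℤ`) and `h_{j,m}`
(`0 ≤ j ≤ n-1`, `m ∈ ℤ`), realized as finitely supported functions. -/
abbrev E (p n : ℕ) := Idx n →₀ ZMod p

/-- The basis vector `ζ_m`. -/
noncomputable def zeta (p n : ℕ) (m : ℤ) : E p n := Finsupp.single (Sum.inl m) 1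

/-- The basis vector `h_{j,m}` (for `j < n`; the index is reduced mod `n`). -/
noncomputable def hh (p n : ℕ) (hn : 0 < n) (j : ℕ) (m : ℤ) : E p n :=
  Finsupp.single (Sum.inr (⟨j % n, Nat.mod_lt _ hn⟩, m)) 1

/-- The subspace `D`, spanned by the `h_{n-1,s-1}` (`p ∤ s`) and the
`h_{[i-1],(sp-1)p^(i-1)}` (`i ≥ 1`, `p ∤ s`), where `[k]` denotes `k % (n-1)`;
it encodes the image of the Bockstein differential `δ` of (1.5). -/
noncomputable def D (p n : ℕ) (hn : 0 < n) : Submodule (ZMod p) (E p n) :=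
  Submodule.span (ZMod p)
    ({y | ∃ s : ℤ, ¬ (p : ℤ) ∣ s ∧ y = hh p n hn (n - 1) (s - 1)} ∪
     {y | ∃ i : ℕ, 1 ≤ i ∧ ∃ s : ℤ, ¬ (p : ℤ) ∣ s ∧
        y = hh p n hn ((i - 1) % (n - 1)) ((s * p - 1) * (p : ℤ) ^ (i - 1))})

/-- Index type for the claimed basis of `E/D`:
`ζ_m` for `m ∈ ℤ`; `h_{n-1,tp-1}` for `t ∈ ℤ`; `h_{j,0}` for `0 ≤ j ≤ n-2`; and
`h_{j,s·p^k}` for `0 ≤ j ≤ n-2`, `k ≥ 0`, `p ∤ s`, subject to `[k] ≠ j`, or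
`s ≢ -1 (mod p)`, or `s ≡ -1 (mod p²)`. -/
def BIdx (p n : ℕ) := ℤ ⊕ ℤ ⊕ Fin (n - 1) ⊕
  {q : ℕ × ℕ × ℤ // q.1 ≤ n - 2 ∧ ¬ (p : ℤ) ∣ q.2.2 ∧
    (q.2.1 % (n - 1) ≠ q.1 ∨ ¬ q.2.2 ≡ -1 [ZMOD (p : ℤ)] ∨ q.2.2 ≡ -1 [ZMOD ((p : ℤ) ^ 2)])}

/-- The elements of `E` whose classes are claimed to form a basis of `E/D`. -/
noncomputable def bElt (p n : ℕ) (hn : 0 < n) : BIdx p n → E p n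
  | .inl m => zeta p n m
  | .inr (.inl t) => hh p n hn (n - 1) (t * p - 1)
  | .inr (.inr (.inl j)) => hh p n hn j 0
  | .inr (.inr (.inr q)) => hh p n hn q.1.1 (q.1.2.2 * (p : ℤ) ^ q.1.2.1)

/-! ### Auxiliary arithmetic lemmas -/

lemma pfac {p : ℕ} (hp : p.Prime) {m : ℤ} (hm : m ≠ 0) :
    ∃ k : ℕ, ∃ s : ℤ, ¬ (p:ℤ) ∣ s ∧ m = s * (p:ℤ)^k := by
  have hfin : FiniteMultiplicity (p:ℤ) m :=
    Int.finiteMultiplicity_iff.2 ⟨by simpa using hp.ne_one, hm⟩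
  obtain ⟨c, hc, hcd⟩ := hfin.exists_eq_pow_mul_and_not_dvd
  exact ⟨_, c, hcd, by rw [hc]; ring⟩

lemma hpne0 {p : ℕ} (hp : p.Prime) : (p:ℤ) ≠ 0 := by exact_mod_cast hp.ne_zero

lemma punique {p : ℕ} (hp : p.Prime) : ∀ (k k' : ℕ) (s s' : ℤ), ¬(p:ℤ) ∣ s → ¬(p:ℤ) ∣ s' →
    s * (p:ℤ)^k = s' * (p:ℤ)^k' → k = k' ∧ s = s' := by
  intro k
  induction k with
  | zero =>
    intro k' s s' hs hs' h
    cases k' with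
    | zero => simpa using h
    | succ k'' =>
      exfalso; apply hs
      rw [pow_zero, mul_one] at h
      exact ⟨s' * (p:ℤ)^k'', by rw [h, pow_succ]; ring⟩
  | succ k ih =>
    intro k' s s' hs hs' h
    cases k' with
    | zero =>
      exfalso; apply hs'
      rw [pow_zero, mul_one] at h
      exact ⟨s * (p:ℤ)^k, by rw [← h, pow_succ]; ring⟩
    | succ k'' =>
      have h2 : s * (p:ℤ)^k = s' * (p:ℤ)^k'' := by
        apply mul_right_cancel₀ (hpne0 hp)
        rw [pow_succ, pow_succ, ← mul_assoc, ← mul_assoc] at h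
        exact h
      obtain ⟨h1, h3⟩ := ih k'' s s' hs hs' h2
      exact ⟨by omega, h3⟩

lemma hsp1 {p : ℕ} (hp : p.Prime) (s : ℤ) : ¬ (p:ℤ) ∣ s * p - 1 := by
  rintro ⟨c, hc⟩
  have h1 : (p:ℤ) ∣ 1 := ⟨s - c, by linarith [hc]⟩
  have h2 := Int.le_of_dvd one_pos h1
  have h3 : (2 : ℤ) ≤ p := by exact_mod_cast hp.two_le
  omega

lemma hsp1ne {p : ℕ} (hp : p.Prime) (s : ℤ) : s * (p:ℤ) - 1 ≠ 0 := by
  intro h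
  exact hsp1 hp s (h ▸ dvd_zero _)

lemma modeqpm1 (p : ℕ) (s : ℤ) : s ≡ -1 [ZMOD ((p:ℤ))] ↔ (p:ℤ) ∣ s + 1 := by
  rw [Int.modEq_iff_dvd, show (-1 : ℤ) - s = -(s+1) by ring, dvd_neg]

lemma modeqpm1sq (p : ℕ) (s : ℤ) : s ≡ -1 [ZMOD ((p:ℤ)^2)] ↔ (p:ℤ)^2 ∣ s + 1 := by
  rw [Int.modEq_iff_dvd, show (-1 : ℤ) - s = -(s+1) by ring, dvd_neg]

/-! ### Combinatorial setup -/

/-- The index set of `E`-basis vectors spanning `D`. -/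
def inS (p n : ℕ) : Idx n → Prop
  | .inl _ => False
  | .inr (j, m) => ((j : ℕ) = n - 1 ∧ ¬ (p:ℤ) ∣ m + 1) ∨
      (∃ k : ℕ, ∃ s : ℤ, ¬ (p:ℤ) ∣ s ∧ (j : ℕ) = k % (n-1) ∧ m = (s * p - 1) * (p:ℤ)^k)

/-- The indices of the claimed basis vectors, inside `Idx n`. -/
def iota (p n : ℕ) (hn : 0 < n) : BIdx p n → Idx n
  | .inl m => .inl m
  | .inr (.inl t) => .inr (⟨(n-1) % n, Nat.mod_lt _ hn⟩, t * p - 1)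
  | .inr (.inr (.inl j)) => .inr (⟨(j : ℕ) % n, Nat.mod_lt _ hn⟩, 0)
  | .inr (.inr (.inr ⟨⟨j, k, s⟩, _⟩)) => .inr (⟨j % n, Nat.mod_lt _ hn⟩, s * (p:ℤ) ^ k)

section Main

variable {p n : ℕ} (hp : p.Prime) (hn : 3 < n)

lemma hh_def (hn0 : 0 < n) {j : ℕ} (hj : j < n) (m : ℤ) :
    hh p n hn0 j m = Finsupp.single (Sum.inr (⟨j, hj⟩, m)) 1 := by
  have hfin : (⟨j % n, Nat.mod_lt _ hn0⟩ : Fin n) = ⟨j, hj⟩ := Fin.ext (Nat.mod_eq_of_lt hj)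
  exact congrArg (fun i : Fin n => Finsupp.single (Sum.inr (i, m)) (1 : ZMod p)) hfin

lemma bElt_eq (hn0 : 0 < n) (b : BIdx p n) :
    bElt p n hn0 b = Finsupp.single (iota p n hn0 b) 1 := by
  rcases b with m | t | j | ⟨⟨j, k, s⟩, hq⟩ <;> rfl

include hn hp

lemma D_le_supported (hn0 : 0 < n) :
    D p n hn0 ≤ Finsupp.supported (ZMod p) (ZMod p) {x | inS p n x} := by
  apply Submodule.span_le.2
  rintro y (⟨s, hs, rfl⟩ | ⟨i, hi, s, hs, rfl⟩)
  · rw [hh_def hn0 (show n - 1 < n by omega)]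
    apply Finsupp.single_mem_supported
    left
    refine ⟨rfl, ?_⟩
    simpa using hs
  · rw [hh_def hn0 (show (i-1) % (n-1) < n from lt_of_lt_of_le (Nat.mod_lt _ (by omega)) (by omega))]
    apply Finsupp.single_mem_supported
    right
    exact ⟨i - 1, s, hs, rfl, rfl⟩

lemma supported_le_D (hn0 : 0 < n) :
    Finsupp.supported (ZMod p) (ZMod p) {x | inS p n x} ≤ D p n hn0 := by
  rw [Finsupp.supported_eq_span_single]
  apply Submodule.span_le.2
  rintro y ⟨x, hx, rfl⟩
  rcases x with m | ⟨⟨jv, hjlt⟩, m⟩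
  · exact absurd hx (by simp [inS])
  · simp only [Set.mem_setOf_eq, inS] at hx
    rcases hx with ⟨hj, hm⟩ | ⟨k, s, hs, hj, rfl⟩
    · subst hj
      apply Submodule.subset_span
      left
      refine ⟨m + 1, hm, ?_⟩
      rw [hh_def hn0 (show n - 1 < n by omega)]
      simp only [add_sub_cancel_right]
    · apply Submodule.subset_span
      right
      refine ⟨k + 1, by omega, s, hs, ?_⟩
      rw [hh_def hn0
        (show (k+1-1) % (n-1) < n from lt_of_lt_of_le (Nat.mod_lt _ (by omega)) (by omega))]
      simp only [Nat.add_sub_cancel]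
      subst hj
      rfl

lemma iota_not_inS (hn0 : 0 < n) (b : BIdx p n) : ¬ inS p n (iota p n hn0 b) := by
  have hn1 : (n - 1) % n = n - 1 := Nat.mod_eq_of_lt (by omega)
  rcases b with m | t | j | ⟨⟨j, k, s⟩, hq1, hq2, hq3⟩
  · simp [iota, inS]
  · simp only [iota, inS, hn1]
    rintro (⟨-, hdvd⟩ | ⟨k, s, hs, hj, -⟩)
    · exact hdvd ⟨t, by ring⟩
    · have := Nat.mod_lt k (show 0 < n - 1 by omega)
      omega
  · have hjn : (j : ℕ) % n = (j : ℕ) := Nat.mod_eq_of_lt (lt_of_lt_of_le j.isLt (by omega))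
    have hjlt := j.isLt
    simp only [iota, inS, hjn]
    rintro (⟨hj, -⟩ | ⟨k, s, hs, -, h0⟩)
    · omega
    · exact mul_ne_zero (hsp1ne hp s) (pow_ne_zero _ (hpne0 hp)) h0.symm
  · replace hq1 : j ≤ n - 2 := hq1
    replace hq2 : ¬ (p:ℤ) ∣ s := hq2
    replace hq3 : k % (n - 1) ≠ j ∨ ¬ s ≡ -1 [ZMOD (p : ℤ)] ∨ s ≡ -1 [ZMOD ((p : ℤ) ^ 2)] := hq3
    have hjn : j % n = j := Nat.mod_eq_of_lt (by omega)
    simp only [iota, inS, hjn]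
    rintro (⟨hj, -⟩ | ⟨k', s', hs', hj, hm⟩)
    · omega
    · obtain ⟨hkk, hss⟩ := punique hp k k' s (s' * p - 1) hq2 (hsp1 hp s') hm
      rcases hq3 with h | h | h
      · exact h (show k % (n - 1) = j by rw [hj, hkk])
      · exact h ((modeqpm1 p s).2 ⟨s', by rw [hss]; ring⟩)
      · rw [modeqpm1sq] at h
        obtain ⟨c, hc⟩ := h
        apply hs'
        refine ⟨c, mul_left_cancel₀ (hpne0 hp) ?_⟩
        rw [hss] at hc
        linear_combination hc

lemma iota_inj (hn0 : 0 < n) : Function.Injective (iota p n hn0) := by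
  have hn1 : (n - 1) % n = n - 1 := Nat.mod_eq_of_lt (by omega)
  rintro (m | t | j | ⟨⟨j, k, s⟩, hq1, hq2, hq3⟩) (m' | t' | j' | ⟨⟨j', k', s'⟩, hq1', hq2', hq3'⟩) h
  all_goals try (replace hq1 : j ≤ n - 2 := hq1)
  all_goals try (replace hq2 : ¬ (p:ℤ) ∣ s := hq2)
  all_goals try (replace hq1' : j' ≤ n - 2 := hq1')
  all_goals try (replace hq2' : ¬ (p:ℤ) ∣ s' := hq2')
  all_goals simp only [iota, Sum.inl.injEq, Sum.inr.injEq, Prod.mk.injEq, Fin.mk.injEq, hn1,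
      reduceCtorEq] at h
  · exact congrArg _ h
  · have : t = t' := by
      have := h.2
      have : t * (p:ℤ) = t' * p := by omega
      exact mul_right_cancel₀ (hpne0 hp) this
    rw [this]
  · have := j'.isLt
    have hjn : (j' : ℕ) % n = (j' : ℕ) := Nat.mod_eq_of_lt (by omega)
    omega
  · have h1 := h.1
    have hjn : j' % n = j' := Nat.mod_eq_of_lt (by omega)
    omega
  · have := j.isLt
    have hjn : (j : ℕ) % n = (j : ℕ) := Nat.mod_eq_of_lt (by omega)
    omega
  · have hl1 := j.isLt
    have hl2 := j'.isLt
    have h1 : (j : ℕ) % n = (j : ℕ) := Nat.mod_eq_of_lt (by omega)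
    have h2 : (j' : ℕ) % n = (j' : ℕ) := Nat.mod_eq_of_lt (by omega)
    have hv : (j : ℕ) = (j' : ℕ) := by omega
    exact congrArg (fun x => Sum.inr (Sum.inr (Sum.inl x))) (Fin.ext hv)
  · exfalso
    have h2 := h.2
    exact mul_ne_zero (fun hs0 => hq2' (by rw [hs0]; exact dvd_zero _))
      (pow_ne_zero _ (hpne0 hp)) h2.symm
  · have h1 := h.1
    have hjn : j % n = j := Nat.mod_eq_of_lt (by omega)
    omega
  · exfalso
    have h2 := h.2
    exact mul_ne_zero (fun hs0 => hq2 (by rw [hs0]; exact dvd_zero _))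
      (pow_ne_zero _ (hpne0 hp)) h2
  · obtain ⟨hkk, hss⟩ := punique hp k k' s s' hq2 hq2' h.2
    have hj1 : j % n = j := Nat.mod_eq_of_lt (by omega)
    have hj2 : j' % n = j' := Nat.mod_eq_of_lt (by omega)
    have hjj : j = j' := by omega
    exact congrArg (fun x => Sum.inr (Sum.inr (Sum.inr x)))
      (Subtype.ext (show ((j, k, s) : ℕ × ℕ × ℤ) = (j', k', s') by rw [hjj, hkk, hss]))

lemma iota_surj (hn0 : 0 < n) (x : Idx n) (hx : ¬ inS p n x) :
    ∃ b : BIdx p n, iota p n hn0 b = x := by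
  rcases x with m | ⟨⟨jv, hjlt⟩, m⟩
  · exact ⟨.inl m, rfl⟩
  · simp only [inS, not_or, not_and_or, not_exists, not_not] at hx
    obtain ⟨hx1, hx2⟩ := hx
    by_cases hjv : jv = n - 1
    · rcases hx1 with h | h
      · exact absurd hjv h
      · obtain ⟨t, ht⟩ := h
        refine ⟨.inr (.inl t), ?_⟩
        simp only [iota]
        congr 2
        · apply Fin.ext
          simp [Nat.mod_eq_of_lt (show n - 1 < n by omega), hjv]
        · have := mul_comm (p : ℤ) t
          omega
    · have hjlt' : jv < n - 1 := by omega
      by_cases hm : m = 0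
      · refine ⟨.inr (.inr (.inl ⟨jv, hjlt'⟩)), ?_⟩
        simp only [iota]
        congr 2
        · apply Fin.ext
          exact Nat.mod_eq_of_lt (by omega)
        · omega
      · obtain ⟨k, s, hs, rfl⟩ := pfac hp hm
        have hcond : k % (n - 1) ≠ jv ∨ ¬ s ≡ -1 [ZMOD (p:ℤ)] ∨ s ≡ -1 [ZMOD ((p:ℤ)^2)] := by
          by_contra hcon
          push_neg at hcon
          obtain ⟨hc1, hc2, hc3⟩ := hcon
          rw [modeqpm1] at hc2
          obtain ⟨c, hc⟩ := hc2
          have hseq : s = c * p - 1 := by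
            have := mul_comm (p : ℤ) c
            omega
          rcases hx2 k c with h | h | h
          · apply hc3
            rw [modeqpm1sq]
            obtain ⟨d, hd⟩ := h
            exact ⟨d, by rw [hc, hd]; ring⟩
          · exact h hc1.symm
          · exact h (by rw [hseq])
        refine ⟨.inr (.inr (.inr ⟨(jv, k, s), show jv ≤ n - 2 by omega, hs, hcond⟩)), ?_⟩
        simp only [iota]
        congr 2
        apply Fin.ext
        exact Nat.mod_eq_of_lt (by omega)

end Main

/-- linear-algebra form of Corollary 1.3: for an odd prime `p` and
`n > 3`, the images in `E/D` of the listed elements form an `F`-basis of `E/D`: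
they are linearly independent and span. -/
theorem stmt7 (p n : ℕ) (hp : p.Prime) (hodd : Odd p) (hn : 3 < n) :
    LinearIndependent (ZMod p)
      (fun b : BIdx p n =>
        (Submodule.Quotient.mk (bElt p n (by omega) b) :
          E p n ⧸ D p n (by omega))) ∧
    Submodule.span (ZMod p)
      (Set.range (fun b : BIdx p n =>
        (Submodule.Quotient.mk (bElt p n (by omega) b) :
          E p n ⧸ D p n (by omega)))) = ⊤ := by
  have hn0 : 0 < n := by omega
  constructor
  · rw [linearIndependent_iff']
    intro t g hg b hb
    have hsum : (∑ i ∈ t, g i • bElt p n hn0 i) ∈ D p n hn0 := by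
      rw [← Submodule.Quotient.mk_eq_zero]
      rw [show (Submodule.Quotient.mk (∑ i ∈ t, g i • bElt p n hn0 i) :
        E p n ⧸ D p n hn0) = (D p n hn0).mkQ (∑ i ∈ t, g i • bElt p n hn0 i) from rfl]
      rw [map_sum]
      simp only [map_smul, Submodule.mkQ_apply]
      exact hg
    have hmem := D_le_supported hp hn hn0 hsum
    rw [Finsupp.mem_supported] at hmem
    have heval : (∑ i ∈ t, g i • bElt p n hn0 i) (iota p n hn0 b) = 0 := by
      by_contra hne
      exact iota_not_inS hp hn hn0 b (hmem (Finsupp.mem_support_iff.2 hne))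
    rw [Finsupp.finset_sum_apply] at heval
    rw [Finset.sum_eq_single b] at heval
    · rw [bElt_eq] at heval
      simpa using heval
    · intro i hi hib
      rw [bElt_eq]
      simp only [Finsupp.smul_apply, Finsupp.single_apply]
      rw [if_neg (fun h => hib (iota_inj hp hn hn0 h))]
      simp
    · intro h; exact absurd hb h
  · have hrange : (Set.range fun b : BIdx p n =>
        (Submodule.Quotient.mk (bElt p n hn0 b) : E p n ⧸ D p n hn0)) =
        (D p n hn0).mkQ '' Set.range (bElt p n hn0) := by
      rw [← Set.range_comp]
      rfl
    rw [hrange, Submodule.span_image, Submodule.map_mkQ_eq_top]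
    rw [eq_top_iff, ← Finsupp.supported_univ (M := ZMod p) (R := ZMod p) (α := Idx n),
      Finsupp.supported_eq_span_single]
    apply Submodule.span_le.2
    rintro y ⟨x, -, rfl⟩
    by_cases hxS : inS p n x
    · exact Submodule.mem_sup_left
        (supported_le_D hp hn hn0 (Finsupp.single_mem_supported _ _ hxS))
    · obtain ⟨b, rfl⟩ := iota_surj hp hn hn0 x hxS
      exact Submodule.mem_sup_right
        (Submodule.subset_span ⟨b, bElt_eq hn0 b⟩)

end Stmt7
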